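/- Let X be a complete metric space. Then X is 4-hyperconvex if and only if X is n-hyperconvex for every positive integer n. -/

import Mathlib

/-- A metric space `X` is `n`-hyperconvex if for every family of `n` closed balls
`B(x i, r i)` with `d(x i, x j) ≤ r i + r j`, the intersection is nonempty. -/
def IsNHyperconvex (X : Type*) [MetricSpace X] (n : ℕ) : Prop :=
  ∀ (x : Fin n → X) (r : Fin n → ℝ), (∀ i, 0 ≤ r i) →
    (∀ i j, dist (x i) (x j) ≤ r i + r j) →
    (⋂ i, Metric.closedBall (x i) (r i)).Nonempty

open Metric

lemma hc_step {X : Type*} [MetricSpace X] {m : ℕ}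
    (hhc : IsNHyperconvex X (m+1))
    (x : Fin (m+2) → X) (r s s' : Fin (m+2) → ℝ) (p : X) (t : ℝ)
    (hr : ∀ i, 0 ≤ r i) (hs' : ∀ i, 0 ≤ s' i) (ht : 0 ≤ t)
    (hxx : ∀ i j, dist (x i) (x j) ≤ r i + r j)
    (hp : ∀ i, dist p (x i) ≤ r i + s i)
    (j k : Fin (m+2)) (hjk : k ≠ j)
    (hcomp : ∀ i, i ≠ j → i ≠ k → s i ≤ t + s' i)
    (hj : s j + t ≤ s' j) (hk : s k + t ≤ s' k) :
    ∃ q, dist p q ≤ t ∧ ∀ i, dist q (x i) ≤ r i + s' i := by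
  obtain ⟨k', hk'⟩ := Fin.exists_succAbove_eq hjk
  set u : Fin m → Fin (m+2) := fun a => j.succAbove (k'.succAbove a) with hu
  have hunej : ∀ a, u a ≠ j := fun a => Fin.succAbove_ne j _
  have hunek : ∀ a, u a ≠ k := by
    intro a h
    apply Fin.succAbove_ne k' a
    apply Fin.succAbove_right_injective (p := j)
    rw [hk']; exact h
  have husurj : ∀ i, i ≠ j → i ≠ k → ∃ a, u a = i := by
    intro i hij hik
    obtain ⟨b, hb⟩ := Fin.exists_succAbove_eq hij
    have hbk : b ≠ k' := by
      rintro rfl; exact hik (hb.symm ▸ hk' ▸ rfl)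
    obtain ⟨a, ha⟩ := Fin.exists_succAbove_eq hbk
    exact ⟨a, by rw [hu]; simp only; rw [ha, hb]⟩
  set y : Fin (m+1) → X := Fin.cons p (fun a => x (u a)) with hy
  set ρ : Fin (m+1) → ℝ := Fin.cons t (fun a => r (u a) + s' (u a)) with hρ
  have hnn : ∀ i : Fin (m+1), 0 ≤ ρ i := by
    intro i
    refine Fin.cases ?_ ?_ i
    · simpa [hρ] using ht
    · intro a; simp only [hρ, Fin.cons_succ]
      have := hs' (u a); have := hr (u a); linarith
  have hpair : ∀ i i' : Fin (m+1), dist (y i) (y i') ≤ ρ i + ρ i' := by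
    intro i i'
    refine Fin.cases ?_ ?_ i <;> [skip; intro a] <;>
      (refine Fin.cases ?_ ?_ i' <;> [skip; (intro b)]) <;>
      simp only [hy, hρ, Fin.cons_zero, Fin.cons_succ]
    · simp only [dist_self]; linarith
    · have h1 := hp (u b)
      have h2 := hcomp (u b) (hunej b) (hunek b)
      linarith
    · rw [dist_comm]
      have h1 := hp (u a)
      have h2 := hcomp (u a) (hunej a) (hunek a)
      linarith
    · have := hxx (u a) (u b); have := hs' (u a); have := hs' (u b); linarith
  obtain ⟨q, hq⟩ := hhc y ρ hnn hpair
  simp only [Set.mem_iInter, mem_closedBall] at hq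
  have hq0 : dist q p ≤ t := by simpa [hy, hρ] using hq 0
  have hqa : ∀ a : Fin m, dist q (x (u a)) ≤ r (u a) + s' (u a) := by
    intro a; simpa [hy, hρ] using hq a.succ
  refine ⟨q, by rwa [dist_comm], ?_⟩
  intro i
  by_cases hij : i = j
  · subst hij
    calc dist q (x i) ≤ dist q p + dist p (x i) := dist_triangle _ _ _
      _ ≤ t + (r i + s i) := by gcongr; exact hp i
      _ ≤ r i + s' i := by linarith [hj]
  · by_cases hik : i = k
    · subst hik
      calc dist q (x i) ≤ dist q p + dist p (x i) := dist_triangle _ _ _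
        _ ≤ t + (r i + s i) := by gcongr; exact hp i
        _ ≤ r i + s' i := by linarith [hk]
    · obtain ⟨a, ha⟩ := husurj i hij hik
      rw [← ha]; exact hqa a

set_option maxHeartbeats 1000000 in
lemma hc_round {X : Type*} [MetricSpace X] {m : ℕ} (hm : 3 ≤ m)
    (hhc : IsNHyperconvex X (m+1))
    (x : Fin (m+2) → X) (r : Fin (m+2) → ℝ)
    (hr : ∀ i, 0 ≤ r i) (hxx : ∀ i j, dist (x i) (x j) ≤ r i + r j)
    (p : X) (σ : ℝ) (hσ : 0 ≤ σ) (hp : ∀ i, dist p (x i) ≤ r i + σ) :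
    ∃ q, dist p q ≤ 5 * (σ / 2) ∧ ∀ i, dist q (x i) ≤ r i + σ / 2 := by
  have ht : (0:ℝ) ≤ σ / 2 := by linarith
  set c0 : Fin (m+2) := ⟨0, by omega⟩ with hc0
  set c1 : Fin (m+2) := ⟨1, by omega⟩ with hc1
  set c2 : Fin (m+2) := ⟨2, by omega⟩ with hc2
  set c3 : Fin (m+2) := ⟨3, by omega⟩ with hc3
  set c4 : Fin (m+2) := ⟨4, by omega⟩ with hc4
  obtain ⟨q1, hd1, hq1⟩ := hc_step hhc x r (fun _ => σ)
    (fun i => if i.val ≤ 1 then σ + σ/2 else σ/2) p (σ/2) hr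
    (by intro i; split_ifs <;> linarith) ht hxx hp c0 c1
    (Fin.ne_of_val_ne (by norm_num))
    (by intro i _ _; split_ifs <;> linarith)
    (by simp only [hc0]; norm_num)
    (by simp only [hc1]; norm_num)
  obtain ⟨q2, hd2, hq2⟩ := hc_step hhc x r
    (fun i => if i.val ≤ 1 then σ + σ/2 else σ/2)
    (fun i => if i.val ≤ 3 then σ else 0) q1 (σ/2) hr
    (by intro i; split_ifs <;> linarith) ht hxx hq1 c2 c3
    (Fin.ne_of_val_ne (by norm_num))
    (by intro i _ _; split_ifs <;> first | linarith | (exfalso; omega))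
    (by simp only [hc2]; norm_num)
    (by simp only [hc3]; norm_num)
  obtain ⟨q3, hd3, hq3⟩ := hc_step hhc x r
    (fun i => if i.val ≤ 3 then σ else 0)
    (fun i => if i.val = 0 then σ + σ/2 else if i.val ≤ 4 then σ/2 else 0) q2 (σ/2) hr
    (by intro i; split_ifs <;> linarith) ht hxx hq2 c4 c0
    (Fin.ne_of_val_ne (by norm_num))
    (by intro i _ _; split_ifs <;> first | linarith | (exfalso; omega))
    (by simp only [hc4]; norm_num)
    (by simp only [hc0]; norm_num)
  obtain ⟨q4, hd4, hq4⟩ := hc_step hhc x r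
    (fun i => if i.val = 0 then σ + σ/2 else if i.val ≤ 4 then σ/2 else 0)
    (fun i => if i.val ≤ 2 then σ else 0) q3 (σ/2) hr
    (by intro i; split_ifs <;> linarith) ht hxx hq3 c1 c2
    (Fin.ne_of_val_ne (by norm_num))
    (by intro i _ _; split_ifs <;> first | linarith | (exfalso; omega))
    (by simp only [hc1]; norm_num)
    (by simp only [hc2]; norm_num)
  obtain ⟨q5, hd5, hq5⟩ := hc_step hhc x r
    (fun i => if i.val ≤ 2 then σ else 0)
    (fun i => if i.val ≤ 4 then σ/2 else 0) q4 (σ/2) hr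
    (by intro i; split_ifs <;> linarith) ht hxx hq4 c3 c4
    (Fin.ne_of_val_ne (by norm_num))
    (by intro i _ _; split_ifs <;> first | linarith | (exfalso; omega))
    (by simp only [hc3]; norm_num)
    (by simp only [hc4]; norm_num)
  refine ⟨q5, ?_, ?_⟩
  · calc dist p q5 ≤ dist p q4 + dist q4 q5 := dist_triangle _ _ _
      _ ≤ (dist p q3 + dist q3 q4) + dist q4 q5 := by gcongr; exact dist_triangle _ _ _
      _ ≤ ((dist p q2 + dist q2 q3) + dist q3 q4) + dist q4 q5 := by
          gcongr; exact dist_triangle _ _ _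
      _ ≤ (((dist p q1 + dist q1 q2) + dist q2 q3) + dist q3 q4) + dist q4 q5 := by
          gcongr; exact dist_triangle _ _ _
      _ ≤ 5 * (σ / 2) := by linarith
  · intro i
    have h5 := hq5 i
    have hle : (if i.val ≤ 4 then σ/2 else 0) ≤ σ / 2 := by split_ifs <;> linarith
    linarith

lemma hc_succ {X : Type*} [MetricSpace X] [CompleteSpace X] {m : ℕ} (hm : 3 ≤ m)
    (hhc : IsNHyperconvex X (m+1)) : IsNHyperconvex X (m+2) := by
  intro x r hr hxx
  set p0 : X := x ⟨0, by omega⟩ with hp0def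
  set σ0 : ℝ := max 0 (Finset.univ.sup' Finset.univ_nonempty
    (fun i => dist p0 (x i) - r i)) with hσ0def
  have hσ0 : 0 ≤ σ0 := le_max_left _ _
  have hp0 : ∀ i, dist p0 (x i) ≤ r i + σ0 := by
    intro i
    have h1 : dist p0 (x i) - r i ≤ σ0 :=
      le_trans (Finset.le_sup' (fun i => dist p0 (x i) - r i) (Finset.mem_univ i))
        (le_max_right _ _)
    linarith
  have hstep : ∀ (k : ℕ) (p : X), (∀ i, dist p (x i) ≤ r i + σ0 / 2 ^ k) →
      ∃ q, dist p q ≤ 5 * σ0 / 2 * (1 / 2) ^ k ∧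
        ∀ i, dist q (x i) ≤ r i + σ0 / 2 ^ (k + 1) := by
    intro k p hp
    have h1 : (0:ℝ) ≤ σ0 / 2 ^ k := by positivity
    obtain ⟨q, hd, hq⟩ := hc_round hm hhc x r hr hxx p (σ0 / 2 ^ k) h1 hp
    have e1 : σ0 / 2 ^ k / 2 = σ0 / 2 ^ (k + 1) := by rw [pow_succ]; ring
    have e2 : 5 * (σ0 / 2 ^ k / 2) = 5 * σ0 / 2 * (1 / 2) ^ k := by
      rw [div_pow, one_pow]; ring
    refine ⟨q, by linarith, fun i => by rw [← e1]; exact hq i⟩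
  choose! f hf1 hf2 using hstep
  set u : ℕ → X := fun k => Nat.rec p0 (fun k q => f k q) k with hudef
  have huS : ∀ k, u (k + 1) = f k (u k) := fun k => rfl
  have hinv : ∀ k, ∀ i, dist (u k) (x i) ≤ r i + σ0 / 2 ^ k := by
    intro k
    induction k with
    | zero => simp only [pow_zero, div_one]; exact hp0
    | succ k ih => rw [huS]; exact hf2 k (u k) ih
  have hdist : ∀ k, dist (u k) (u (k + 1)) ≤ 5 * σ0 / 2 * (1 / 2) ^ k := by
    intro k; rw [huS]; exact hf1 k (u k) (hinv k)
  have hcauchy : CauchySeq u := cauchySeq_of_le_geometric (1/2) (5 * σ0 / 2)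
    (by norm_num) hdist
  obtain ⟨q, hq⟩ := cauchySeq_tendsto_of_complete hcauchy
  refine ⟨q, ?_⟩
  simp only [Set.mem_iInter, mem_closedBall]
  intro i
  have h1 : Filter.Tendsto (fun k => dist (u k) (x i)) Filter.atTop
      (nhds (dist q (x i))) := hq.dist tendsto_const_nhds
  have h3 : Filter.Tendsto (fun k : ℕ => σ0 / 2 ^ k) Filter.atTop (nhds 0) := by
    have h4 := (tendsto_pow_atTop_nhds_zero_of_lt_one (by norm_num : (0:ℝ) ≤ 1/2)
      (by norm_num)).const_mul σ0
    simp only [mul_zero] at h4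
    convert h4 using 2 with k
    rw [div_pow, one_pow]; ring
  have h2 : Filter.Tendsto (fun k : ℕ => r i + σ0 / 2 ^ k) Filter.atTop
      (nhds (r i)) := by
    simpa using tendsto_const_nhds.add h3
  exact le_of_tendsto_of_tendsto' h1 h2 (fun k => hinv k i)

lemma hc_anti {X : Type*} [MetricSpace X] {n k : ℕ} (hk : 0 < k) (hkn : k ≤ n)
    (h : IsNHyperconvex X n) : IsNHyperconvex X k := by
  intro x r hr hxx
  set g : Fin n → Fin k := fun l => ⟨min l.val (k - 1), by omega⟩ with hg
  obtain ⟨q, hq⟩ := h (x ∘ g) (r ∘ g) (fun i => hr _) (fun i j => hxx _ _)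
  simp only [Set.mem_iInter, mem_closedBall, Function.comp] at hq
  refine ⟨q, ?_⟩
  simp only [Set.mem_iInter, mem_closedBall]
  intro i
  have h1 := hq ⟨i.val, by omega⟩
  have h2 : g ⟨i.val, by omega⟩ = i := by
    simp only [hg]; ext; simp; omega
  rwa [h2] at h1

theorem isNHyperconvex_four_iff_forall (X : Type*) [MetricSpace X] [CompleteSpace X] :
    IsNHyperconvex X 4 ↔ ∀ n : ℕ, 0 < n → IsNHyperconvex X n := by
  constructor
  · intro h4 n hn
    have key : ∀ j : ℕ, IsNHyperconvex X (j + 4) := by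
      intro j
      induction j with
      | zero => exact h4
      | succ j ih => exact hc_succ (m := j + 3) (by omega) ih
    rcases le_or_gt n 4 with h | h
    · exact hc_anti hn h h4
    · have e : n - 4 + 4 = n := by omega
      exact e ▸ key (n - 4)
  · intro h
    exact h 4 (by norm_num)
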